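/- Let ℱ be a family of subsets of {1,…,n} and let ℓ ≥ 1. For a permutation π of {1,…,n}, let X_ℓ(π) denote the number of chains F₁ ⊋ F₂ ⊋ ⋯ ⊋ F_ℓ with all F_i ∈ ℱ such that every F_i is contained in π. Then the average of X_ℓ over all n! permutations equals Σ_{F ∈ ℱ} c_ℓ(F) / C(n,|F|). -/

import Mathlib

open Finset

/-- A `k`-chain: `k` distinct sets totally ordered by strict inclusion. -/
def IsKChain {n : ℕ} (k : ℕ) (𝒞 : Finset (Finset (Fin n))) : Prop :=
  𝒞.card = k ∧ IsChain (· ⊂ ·) (𝒞 : Set (Finset (Fin n)))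

/-- A family contains no `k`-chain. -/
def NoKChain {n : ℕ} (k : ℕ) (𝒜 : Finset (Finset (Fin n))) : Prop :=
  ∀ 𝒞 ⊆ 𝒜, ¬ IsKChain k 𝒞

/-- The weight of a chain tuple `F₁ ⊋ F₂ ⊋ ⋯ ⊋ F_ℓ`: the product
`C(|F₁|,|F₂|)⁻¹ ⋯ C(|F_{ℓ-1}|,|F_ℓ|)⁻¹` of reciprocals of consecutive binomial coefficients. -/
noncomputable def chainWeight {n ℓ : ℕ} (G : Fin ℓ → Finset (Fin n)) : ℝ :=
  ∏ i : Fin ℓ, if h : (i : ℕ) + 1 < ℓ then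
    (((G i).card.choose (G ⟨(i : ℕ) + 1, h⟩).card : ℕ) : ℝ)⁻¹ else 1

open scoped Classical in
/-- The `ℓ`-chain density of `F₁` with respect to the family `𝓕`: the sum of `chainWeight`
over all chains `F₁ ⊋ F₂ ⊋ ⋯ ⊋ F_ℓ` with `F₂, …, F_ℓ ∈ 𝓕`.  In particular the `1`-chain
density is always `1`. -/
noncomputable def chainDensity {n : ℕ} (𝓕 : Finset (Finset (Fin n))) (ℓ : ℕ)
    (F₁ : Finset (Fin n)) : ℝ :=
  ∑ G : Fin ℓ → Finset (Fin n),
    if (∀ h : 0 < ℓ, G ⟨0, h⟩ = F₁) ∧ (∀ i : Fin ℓ, (i : ℕ) ≠ 0 → G i ∈ 𝓕) ∧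
        (∀ i j : Fin ℓ, i < j → G j ⊂ G i)
      then chainWeight G else 0

/-- A permutation `π` of `{1,…,n}` contains a set `F` if `F = {π(1), …, π(|F|)}`,
i.e. `F` is the image under `π` of the first `|F|` elements. -/
def ContainsSet {n : ℕ} (π : Equiv.Perm (Fin n)) (F : Finset (Fin n)) : Prop :=
  F = Finset.image π (Finset.univ.filter (fun j : Fin n => (j : ℕ) < F.card))

/-- The average, over all `n!` permutations `π`, of the number of `ℓ`-chains from `𝓕`
contained in `π`, equals `Σ_{F ∈ 𝓕} c_ℓ(F)/C(n,|F|)`. -/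

lemma card_prefix {n c : ℕ} (hc : c ≤ n) :
    (univ.filter fun j : Fin n => (j:ℕ) < c).card = c := by
  apply Finset.card_eq_of_bijective (fun i h => ⟨i, lt_of_lt_of_le h hc⟩)
  · intro a ha
    simp only [mem_filter, mem_univ, true_and] at ha
    exact ⟨a, ha, rfl⟩
  · intro i h; simp [h]
  · intro i j hi hj hij; simpa using congrArg Fin.val hij

lemma mem_iff_lt_card {ℓ : ℕ} (S : Finset (Fin ℓ))
    (h : ∀ i j : Fin ℓ, i ≤ j → j ∈ S → i ∈ S) (i : Fin ℓ) :
    i ∈ S ↔ (i:ℕ) < S.card := by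
  constructor
  · intro hi
    have hsub : Finset.Iic i ⊆ S := fun j hj => h j i (Finset.mem_Iic.mp hj) hi
    have := Finset.card_le_card hsub
    rw [Fin.card_Iic] at this; omega
  · intro hi
    by_contra hx
    have hsub : S ⊆ Finset.Iio i := by
      intro j hj
      rw [Finset.mem_Iio]
      by_contra hji
      exact hx (h i j (le_of_not_gt hji) hj)
    have := Finset.card_le_card hsub
    rw [Fin.card_Iio] at this; omega


def permFiberEquiv {α β : Type*} (f g : α → β) :
    {π : Equiv.Perm α // f ∘ π = g} ≃ ∀ b : β, ({x // g x = b} ≃ {x // f x = b}) where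
  toFun π b := Equiv.subtypeEquiv π.1 (fun x => by
    rw [← congrFun π.2 x]; rfl)
  invFun e := ⟨(Equiv.sigmaFiberEquiv g).symm.trans
      ((Equiv.sigmaCongrRight e).trans (Equiv.sigmaFiberEquiv f)), by
    funext x
    simp [Equiv.sigmaFiberEquiv]
    exact (e (g x) ⟨x, rfl⟩).2⟩
  left_inv π := by
    ext x
    simp [Equiv.sigmaFiberEquiv, Equiv.subtypeEquiv]
  right_inv e := by
    funext b
    ext x
    obtain ⟨x, hx⟩ := x
    subst hx
    simp [Equiv.sigmaFiberEquiv, Equiv.subtypeEquiv]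

lemma card_perm_comp {α β : Type*} [Fintype α] [DecidableEq α] [Fintype β] [DecidableEq β]
    (f g : α → β) :
    (univ.filter fun π : Equiv.Perm α => f ∘ π = g).card
      = ∏ b : β, Fintype.card ({x // g x = b} ≃ {x // f x = b}) := by
  rw [← Fintype.card_subtype, ← Fintype.card_pi]
  exact Fintype.card_congr (permFiberEquiv f g)


lemma key1 (c : ℕ → ℕ) : ∀ m, (∀ i, i < m → c (i+1) ≤ c i) →
    (∏ i ∈ range m, (c i).choose (c (i+1)) * (c i - c (i+1)).factorial)
      * (c m).factorial = (c 0).factorial := by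
  intro m
  induction m with
  | zero => simp
  | succ m ih =>
    intro h
    rw [prod_range_succ, mul_assoc,
      show (c m).choose (c (m+1)) * (c m - c (m+1)).factorial * (c (m+1)).factorial
        = (c m).factorial by
          rw [mul_right_comm]
          exact Nat.choose_mul_factorial_mul_factorial (h m (by omega))]
    exact ih (fun i hi => h i (by omega))

lemma containsSet_iff {n : ℕ} (π : Equiv.Perm (Fin n)) (F : Finset (Fin n)) :
    ContainsSet π F ↔ ∀ j : Fin n, ((j:ℕ) < F.card ↔ π j ∈ F) := by
  have hF : F.card ≤ n := by
    simpa using Finset.card_le_univ F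
  constructor
  · intro h j
    constructor
    · intro hj
      rw [h]
      exact Finset.mem_image_of_mem π (by simp [hj])
    · intro hj
      rw [h] at hj
      obtain ⟨j', hj', e⟩ := Finset.mem_image.mp hj
      have := π.injective e
      subst this
      simpa using hj'
  · intro h
    have hsub : F ⊆ Finset.image π (Finset.univ.filter fun j : Fin n => (j:ℕ) < F.card) := by
      intro x hx
      have hx' : π (π.symm x) ∈ F := by simpa using hx
      rw [← h (π.symm x)] at hx'
      exact Finset.mem_image.mpr ⟨π.symm x, by simp [hx'], by simp⟩
    refine (Finset.eq_of_subset_of_card_le hsub ?_)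
    rw [Finset.card_image_of_injective _ π.injective, card_prefix hF]

open scoped Classical in
lemma chain_count {n ℓ : ℕ} (hℓ : 0 < ℓ) (G : Fin ℓ → Finset (Fin n))
    (hch : ∀ i j : Fin ℓ, i < j → G j ⊂ G i) :
    ((univ.filter fun π : Equiv.Perm (Fin n) => ∀ i, ContainsSet π (G i)).card : ℝ)
        / (n.factorial : ℝ)
      = chainWeight G / (n.choose (G ⟨0, hℓ⟩).card : ℝ) := by
  classical
  obtain ⟨m, rfl⟩ : ∃ m, ℓ = m + 1 := ⟨ℓ - 1, by omega⟩
  -- the cardinality sequence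
  set c : ℕ → ℕ := fun i => if h : i < (m+1) then (G ⟨i, h⟩).card else 0 with hc
  have hcdef : ∀ (i : Fin (m+1)), c (i : ℕ) = (G i).card := by
    intro i; simp only [hc, i.isLt, dif_pos]
  have hcle : ∀ i, i + 1 < (m+1) → c (i+1) < c i := by
    intro i h
    have h1 : i < (m+1) := by omega
    have := Finset.card_lt_card (hch ⟨i, h1⟩ ⟨i+1, h⟩ (by simp [Fin.lt_def]))
    simpa only [hc, dif_pos h1, dif_pos h] using this
  have hcn : ∀ i, c i ≤ n := by
    intro i
    by_cases h : i < (m+1)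
    · simp only [hc, dif_pos h]
      simpa using Finset.card_le_univ (G ⟨i, h⟩)
    · simp [hc, show ¬ i ≤ m by omega]
  -- the two fiber functions
  have hfle : ∀ x : Fin n, (univ.filter fun i : Fin (m+1) => x ∈ G i).card ≤ (m+1) :=
    fun x => le_trans (card_filter_le _ _) (by simp)
  have hgle : ∀ j : Fin n, (univ.filter fun i : Fin (m+1) => (j:ℕ) < (G i).card).card ≤ (m+1) :=
    fun j => le_trans (card_filter_le _ _) (by simp)
  set f : Fin n → Fin ((m+1)+1) :=
    fun x => ⟨(univ.filter fun i : Fin (m+1) => x ∈ G i).card, Nat.lt_succ_of_le (hfle x)⟩ with hfdef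
  set g : Fin n → Fin ((m+1)+1) :=
    fun j => ⟨(univ.filter fun i : Fin (m+1) => (j:ℕ) < (G i).card).card,
      Nat.lt_succ_of_le (hgle j)⟩ with hgdef
  have hf : ∀ (x : Fin n) (i : Fin (m+1)), x ∈ G i ↔ (i:ℕ) < (f x : ℕ) := by
    intro x i
    have hdown : ∀ i j : Fin (m+1), i ≤ j → j ∈ (univ.filter fun i : Fin (m+1) => x ∈ G i)
        → i ∈ (univ.filter fun i : Fin (m+1) => x ∈ G i) := by
      intro i j hij hj
      simp only [mem_filter, mem_univ, true_and] at hj ⊢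
      rcases eq_or_lt_of_le hij with rfl | h
      · exact hj
      · exact (hch i j h).subset hj
    have := mem_iff_lt_card _ hdown i
    simpa using this
  have hg : ∀ (j : Fin n) (i : Fin (m+1)), (j:ℕ) < (G i).card ↔ (i:ℕ) < (g j : ℕ) := by
    intro j i
    have hdown : ∀ i i' : Fin (m+1), i ≤ i'
        → i' ∈ (univ.filter fun i : Fin (m+1) => (j:ℕ) < (G i).card)
        → i ∈ (univ.filter fun i : Fin (m+1) => (j:ℕ) < (G i).card) := by
      intro i i' hii hj
      simp only [mem_filter, mem_univ, true_and] at hj ⊢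
      rcases eq_or_lt_of_le hii with rfl | h
      · exact hj
      · exact lt_of_lt_of_le hj (Finset.card_le_card (hch i i' h).subset)
    have := mem_iff_lt_card _ hdown i
    simpa using this
  have hfg : ∀ π : Equiv.Perm (Fin n), (∀ i, ContainsSet π (G i)) ↔ f ∘ π = g := by
    intro π
    constructor
    · intro h
      funext j
      apply Fin.ext
      show (univ.filter fun i : Fin (m+1) => π j ∈ G i).card
          = (univ.filter fun i : Fin (m+1) => (j:ℕ) < (G i).card).card
      congr 1
      apply filter_congr
      intro i _
      exact ((containsSet_iff π (G i)).mp (h i) j).symm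
    · intro h i
      rw [containsSet_iff]
      intro j
      have hπ : f (π j) = g j := congrFun h j
      rw [hg j i, hf (π j) i, hπ]
  have hfilter : (univ.filter fun π : Equiv.Perm (Fin n) => ∀ i, ContainsSet π (G i))
      = univ.filter fun π : Equiv.Perm (Fin n) => f ∘ π = g :=
    filter_congr fun π _ => hfg π
  -- the A function : cards of superlevel sets
  set A : ℕ → ℕ := fun v => if v = 0 then n else if v ≤ (m+1) then c (v-1) else 0 with hA
  have hgef : ∀ v : ℕ, (univ.filter fun x : Fin n => v ≤ (f x : ℕ)).card = A v := by
    intro v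
    match v with
    | 0 => simp [hA]
    | v+1 =>
      by_cases h : v + 1 ≤ (m+1)
      · have hv : v < (m+1) := h
        have he : (univ.filter fun x : Fin n => v + 1 ≤ (f x:ℕ)) = G ⟨v, hv⟩ := by
          ext x
          simp only [mem_filter, mem_univ, true_and]
          rw [Nat.succ_le_iff]
          exact (hf x ⟨v, hv⟩).symm
        have hAv : A (v+1) = c v := by simp [hA, h]
        rw [he, hAv]
        exact (hcdef ⟨v, hv⟩).symm
      · have he : (univ.filter fun x : Fin n => v + 1 ≤ (f x:ℕ)) = ∅ := by
          rw [Finset.filter_eq_empty_iff]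
          intro x _
          have := hfle x
          simp only [hfdef]
          omega
        rw [he]
        simp [hA, h]
  have hgeg : ∀ v : ℕ, (univ.filter fun x : Fin n => v ≤ (g x : ℕ)).card = A v := by
    intro v
    match v with
    | 0 => simp [hA]
    | v+1 =>
      by_cases h : v + 1 ≤ (m+1)
      · have hv : v < (m+1) := h
        have he : (univ.filter fun x : Fin n => v + 1 ≤ (g x:ℕ))
            = univ.filter fun x : Fin n => (x:ℕ) < c v := by
          apply filter_congr
          intro x _
          rw [Nat.succ_le_iff]
          have h2 := (hg x ⟨v, hv⟩).symm
          rw [← hcdef ⟨v, hv⟩] at h2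
          exact h2
        have hAv : A (v+1) = c v := by simp [hA, h]
        rw [he, hAv]
        exact card_prefix (hcn v)
      · have he : (univ.filter fun x : Fin n => v + 1 ≤ (g x:ℕ)) = ∅ := by
          rw [Finset.filter_eq_empty_iff]
          intro x _
          have := hgle x
          simp only [hgdef]
          omega
        rw [he]
        simp [hA, h]
  -- fiber cards
  have hfib : ∀ (h : Fin n → Fin ((m+1)+1)),
      (∀ v : ℕ, (univ.filter fun x => v ≤ (h x:ℕ)).card = A v) →
      ∀ b : Fin ((m+1)+1), (univ.filter fun x => h x = b).card = A (b:ℕ) - A ((b:ℕ)+1) := by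
    intro h hh b
    have hsub : (univ.filter fun x => (b:ℕ)+1 ≤ (h x:ℕ))
        ⊆ univ.filter fun x => (b:ℕ) ≤ (h x:ℕ) := by
      intro x hx
      simp only [mem_filter, mem_univ, true_and] at hx ⊢
      omega
    have heq : (univ.filter fun x => h x = b)
        = (univ.filter fun x => (b:ℕ) ≤ (h x:ℕ)) \ (univ.filter fun x => (b:ℕ)+1 ≤ (h x:ℕ)) := by
      ext x
      simp only [mem_filter, mem_univ, true_and, mem_sdiff, Fin.ext_iff]
      omega
    rw [heq, card_sdiff_of_subset hsub, hh, hh]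
  -- total count
  have hcount : (univ.filter fun π : Equiv.Perm (Fin n) => ∀ i, ContainsSet π (G i)).card
      = ∏ v ∈ range ((m+1)+1), (A v - A (v+1)).factorial := by
    rw [hfilter, card_perm_comp f g, ← Fin.prod_univ_eq_prod_range]
    apply Finset.prod_congr rfl
    intro b _
    have e1 : Fintype.card {x // g x = b} = A (b:ℕ) - A ((b:ℕ)+1) := by
      rw [Fintype.card_subtype]; exact hfib g hgeg b
    have e2 : Fintype.card {x // f x = b} = A (b:ℕ) - A ((b:ℕ)+1) := by
      rw [Fintype.card_subtype]; exact hfib f hgef b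
    rw [Fintype.card_equiv (Fintype.equivOfCardEq (by rw [e1, e2])), e1]
  -- the binomial product
  set P : ℕ := ∏ i ∈ range m, (c i).choose (c (i+1)) with hP
  have hw : chainWeight G = ((P : ℕ) : ℝ)⁻¹ := by
    unfold chainWeight
    have hterm : ∀ i : Fin (m+1), (if h : (i:ℕ)+1 < m+1 then
        (((G i).card.choose (G ⟨(i:ℕ)+1, h⟩).card : ℕ):ℝ)⁻¹ else 1)
        = (fun k : ℕ => if k+1 < m+1 then (((c k).choose (c (k+1)) : ℕ):ℝ)⁻¹ else 1) (i:ℕ) := by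
      intro i
      show _ = if (i:ℕ) + 1 < m + 1 then (((c (i:ℕ)).choose (c ((i:ℕ)+1)) : ℕ):ℝ)⁻¹ else 1
      by_cases h : (i:ℕ)+1 < m+1
      · rw [dif_pos h, if_pos h, ← hcdef i, ← hcdef ⟨(i:ℕ)+1, h⟩]
      · rw [dif_neg h, if_neg h]
    rw [Finset.prod_congr rfl (fun i _ => hterm i),
      Fin.prod_univ_eq_prod_range
        (fun k => if k + 1 < m + 1 then (((c k).choose (c (k+1)) : ℕ):ℝ)⁻¹ else 1) (m+1),
      prod_range_succ, if_neg (lt_irrefl (m+1)), mul_one,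
      Finset.prod_congr rfl (fun i hi => if_pos (by
        rw [mem_range] at hi; omega : i + 1 < m + 1)),
      hP, Nat.cast_prod]
    exact Finset.prod_inv_distrib _
  have hmono : ∀ i, i < m → c (i+1) ≤ c i := fun i hi => le_of_lt (hcle i (by omega))
  have hkey := key1 c m hmono
  have hprod : P * (∏ v ∈ range (m+2), (A v - A (v+1)).factorial)
      = (c 0).factorial * (n - c 0).factorial := by
    rw [prod_range_succ']
    have h0 : A 0 - A 1 = n - c 0 := by simp [hA]
    have h1 : ∏ v ∈ range (m+1), (A (v+1) - A (v+1+1)).factorial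
        = (∏ i ∈ range m, (c i - c (i+1)).factorial) * (c m).factorial := by
      rw [prod_range_succ]
      congr 1
      · apply Finset.prod_congr rfl
        intro v hv
        rw [mem_range] at hv
        have e1 : A (v+1) = c v := by
          have : v + 1 ≤ m + 1 := by omega
          simp [hA, this]
        have e2 : A (v+1+1) = c (v+1) := by
          have : v + 2 ≤ m + 1 := by omega
          simp [hA, this]
        rw [e1, e2]
      · have e1 : A (m+1) = c m := by simp [hA]
        have e2 : A (m+1+1) = 0 := by
          have : ¬ (m + 2 ≤ m + 1) := by omega
          simp [hA, this]
        rw [e1, e2, Nat.sub_zero]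
    have h2 : P * (∏ i ∈ range m, (c i - c (i+1)).factorial) * (c m).factorial
        = (c 0).factorial := by
      rw [hP, ← prod_mul_distrib]
      exact hkey
    calc P * ((∏ v ∈ range (m+1), (A (v+1) - A (v+1+1)).factorial) * (A 0 - A 1).factorial)
        = (P * (∏ i ∈ range m, (c i - c (i+1)).factorial) * (c m).factorial)
            * (n - c 0).factorial := by rw [h0, h1]; ring
      _ = (c 0).factorial * (n - c 0).factorial := by rw [h2]
  have hc0 : c 0 ≤ n := hcn 0
  have hNat : (univ.filter fun π : Equiv.Perm (Fin n) => ∀ i, ContainsSet π (G i)).card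
      * (n.choose (c 0) * P) = n.factorial := by
    rw [hcount]
    calc (∏ v ∈ range (m+1+1), (A v - A (v+1)).factorial) * (n.choose (c 0) * P)
        = n.choose (c 0) * (P * ∏ v ∈ range (m+2), (A v - A (v+1)).factorial) := by ring
      _ = n.choose (c 0) * ((c 0).factorial * (n - c 0).factorial) := by rw [hprod]
      _ = n.factorial := by
          rw [← Nat.choose_mul_factorial_mul_factorial hc0]; ring
  have hPpos : 0 < P := prod_pos fun i hi => Nat.choose_pos (hmono i (mem_range.mp hi))
  have hchpos : 0 < n.choose (c 0) := Nat.choose_pos hc0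
  have hcast : ((univ.filter fun π : Equiv.Perm (Fin n) =>
        ∀ i, ContainsSet π (G i)).card : ℝ) * ((n.choose (c 0) : ℝ) * (P : ℝ))
      = (n.factorial : ℝ) := by exact_mod_cast congrArg (Nat.cast (R := ℝ)) hNat
  rw [hw, show (G ⟨0, hℓ⟩).card = c 0 from (hcdef ⟨0, hℓ⟩).symm]
  rw [div_eq_div_iff (by positivity) (by exact_mod_cast hchpos.ne')]
  rw [← hcast]
  have hPne : ((P : ℕ) : ℝ) ≠ 0 := by exact_mod_cast hPpos.ne'
  rw [inv_mul_eq_div, eq_div_iff hPne]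
  ring

theorem statement11 (n ℓ : ℕ) (hℓ : 1 ≤ ℓ) (𝓕 : Finset (Finset (Fin n))) :
    (∑ π : Equiv.Perm (Fin n), (Set.ncard {G : Fin ℓ → Finset (Fin n) |
        (∀ i, G i ∈ 𝓕) ∧ (∀ i j : Fin ℓ, i < j → G j ⊂ G i) ∧
        (∀ i, ContainsSet π (G i))} : ℝ)) / (n.factorial : ℝ)
      = ∑ F ∈ 𝓕, chainDensity 𝓕 ℓ F / (n.choose F.card : ℝ) := by
  classical
  have hℓ0 : 0 < ℓ := hℓ
  have hL : ∀ π : Equiv.Perm (Fin n),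
      (Set.ncard {G : Fin ℓ → Finset (Fin n) |
        (∀ i, G i ∈ 𝓕) ∧ (∀ i j : Fin ℓ, i < j → G j ⊂ G i) ∧
        (∀ i, ContainsSet π (G i))} : ℝ)
      = ∑ G : Fin ℓ → Finset (Fin n),
          if ((∀ i, G i ∈ 𝓕) ∧ (∀ i j : Fin ℓ, i < j → G j ⊂ G i)) then
            (if (∀ i, ContainsSet π (G i)) then (1:ℝ) else 0) else 0 := by
    intro π
    rw [Set.ncard_eq_toFinset_card', Set.toFinset_setOf, Finset.card_filter]
    push_cast
    apply Finset.sum_congr rfl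
    intro G _
    split_ifs <;> simp_all
  have step1 : (∑ π : Equiv.Perm (Fin n), (Set.ncard {G : Fin ℓ → Finset (Fin n) |
        (∀ i, G i ∈ 𝓕) ∧ (∀ i j : Fin ℓ, i < j → G j ⊂ G i) ∧
        (∀ i, ContainsSet π (G i))} : ℝ))
      = ∑ G : Fin ℓ → Finset (Fin n),
          if ((∀ i, G i ∈ 𝓕) ∧ (∀ i j : Fin ℓ, i < j → G j ⊂ G i)) then
            ((univ.filter fun π : Equiv.Perm (Fin n) => ∀ i, ContainsSet π (G i)).card : ℝ)
          else 0 := by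
    rw [Finset.sum_congr rfl (fun π _ => hL π), Finset.sum_comm]
    apply Finset.sum_congr rfl
    intro G _
    by_cases hG : (∀ i, G i ∈ 𝓕) ∧ (∀ i j : Fin ℓ, i < j → G j ⊂ G i)
    · simp only [if_pos hG]
      simp [Finset.sum_boole]
    · simp [hG]
  rw [step1, Finset.sum_div]
  have step2 : ∀ G : Fin ℓ → Finset (Fin n),
      (if ((∀ i, G i ∈ 𝓕) ∧ (∀ i j : Fin ℓ, i < j → G j ⊂ G i)) then
          ((univ.filter fun π : Equiv.Perm (Fin n) => ∀ i, ContainsSet π (G i)).card : ℝ)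
        else 0) / (n.factorial : ℝ)
      = if ((∀ i, G i ∈ 𝓕) ∧ (∀ i j : Fin ℓ, i < j → G j ⊂ G i)) then
          chainWeight G / (n.choose (G ⟨0, hℓ0⟩).card : ℝ) else 0 := by
    intro G
    by_cases hG : (∀ i, G i ∈ 𝓕) ∧ (∀ i j : Fin ℓ, i < j → G j ⊂ G i)
    · rw [if_pos hG, if_pos hG]
      exact chain_count hℓ0 G hG.2
    · rw [if_neg hG, if_neg hG, zero_div]
  rw [Finset.sum_congr rfl (fun G _ => step2 G)]
  have hR1 : ∀ F : Finset (Fin n), chainDensity 𝓕 ℓ F / (n.choose F.card : ℝ)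
      = ∑ G : Fin ℓ → Finset (Fin n),
          if (∀ h : 0 < ℓ, G ⟨0, h⟩ = F) ∧ (∀ i : Fin ℓ, (i : ℕ) ≠ 0 → G i ∈ 𝓕) ∧
              (∀ i j : Fin ℓ, i < j → G j ⊂ G i)
            then chainWeight G / (n.choose F.card : ℝ) else 0 := by
    intro F
    unfold chainDensity
    rw [Finset.sum_div]
    apply Finset.sum_congr rfl
    intro G _
    split_ifs <;> simp
  rw [Finset.sum_congr rfl (fun F _ => hR1 F), Finset.sum_comm]
  apply Finset.sum_congr rfl
  intro G _
  by_cases hD : (∀ i : Fin ℓ, (i : ℕ) ≠ 0 → G i ∈ 𝓕) ∧ (∀ i j : Fin ℓ, i < j → G j ⊂ G i)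
  · have hcond : ∀ F : Finset (Fin n),
        ((∀ h : 0 < ℓ, G ⟨0, h⟩ = F) ∧ (∀ i : Fin ℓ, (i : ℕ) ≠ 0 → G i ∈ 𝓕) ∧
          (∀ i j : Fin ℓ, i < j → G j ⊂ G i)) ↔ F = G ⟨0, hℓ0⟩ := by
      intro F
      constructor
      · intro h
        exact (h.1 hℓ0).symm
      · intro h
        exact ⟨fun _ => h.symm, hD.1, hD.2⟩
    refine Eq.symm ?_
    calc ∑ F ∈ 𝓕, (if (∀ h : 0 < ℓ, G ⟨0, h⟩ = F) ∧ (∀ i : Fin ℓ, (i : ℕ) ≠ 0 → G i ∈ 𝓕) ∧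
          (∀ i j : Fin ℓ, i < j → G j ⊂ G i) then chainWeight G / (n.choose F.card : ℝ) else 0)
        = ∑ F ∈ 𝓕, (if F = G ⟨0, hℓ0⟩ then chainWeight G / (n.choose F.card : ℝ) else 0) := by
          apply Finset.sum_congr rfl
          intro F _
          rw [if_congr (hcond F) rfl rfl]
      _ = if G ⟨0, hℓ0⟩ ∈ 𝓕 then chainWeight G / (n.choose (G ⟨0, hℓ0⟩).card : ℝ) else 0 :=
          Finset.sum_ite_eq' 𝓕 (G ⟨0, hℓ0⟩) _
      _ = if (∀ i, G i ∈ 𝓕) ∧ (∀ i j : Fin ℓ, i < j → G j ⊂ G i) then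
            chainWeight G / (n.choose (G ⟨0, hℓ0⟩).card : ℝ) else 0 := by
          apply (if_congr ?_ rfl rfl)
          constructor
          · intro h
            refine ⟨fun i => ?_, hD.2⟩
            by_cases hi : (i : ℕ) = 0
            · have hii : i = ⟨0, hℓ0⟩ := Fin.ext hi
              rwa [hii]
            · exact hD.1 i hi
          · intro h
            exact h.1 ⟨0, hℓ0⟩
  · have h1 : ∀ F ∈ 𝓕, (if (∀ h : 0 < ℓ, G ⟨0, h⟩ = F) ∧ (∀ i : Fin ℓ, (i : ℕ) ≠ 0 → G i ∈ 𝓕) ∧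
        (∀ i j : Fin ℓ, i < j → G j ⊂ G i) then chainWeight G / (n.choose F.card : ℝ) else 0) = 0 := by
      intro F _
      rw [if_neg]
      intro h
      exact hD ⟨h.2.1, h.2.2⟩
    rw [Finset.sum_congr rfl h1, Finset.sum_const_zero, if_neg]
    intro h
    exact hD ⟨fun i _ => h.1 i, h.2⟩
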